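/- The Lebesgue measure (volume) of the set {(r,s,t) ∈ [0,1]³ : Q(r,s,t) ≤ 1/4} equals (1/4)·(1 + ln 4). -/

import Mathlib

open MeasureTheory Set

namespace CdfAux






noncomputable def g (r s : ℝ) : ℝ :=
  if 1/4 < r*s then (r + s - r*s - 3/4)/(r + s - 1)
  else if 1/4 < (1-r)*(1-s) then (1/4 - r*s)/(1 - r - s)
  else 1

noncomputable def h (r : ℝ) : ℝ :=
  if r ≤ 1/4 then
    1/4 + r + (r-1/2)^2 * (Real.log ((2-2*r)^2) - Real.log ((1-2*r)^2))
  else if r ≤ 3/4 then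
    1/2 + (r-1/2)^2 * (Real.log ((2*r)^2) + Real.log ((2-2*r)^2) - 2*Real.log ((2*r-1)^2))
  else
    5/4 - r + (r-1/2)^2 * (Real.log ((2*r)^2) - Real.log ((2*r-1)^2))

lemma key1' {r s : ℝ} (hr : r ∈ Icc (0:ℝ) 1) (hs : s ∈ Icc (0:ℝ) 1) (h : 1/4 < r*s) :
    1 < r + s := by
  obtain ⟨hr0, hr1⟩ := hr; obtain ⟨hs0, hs1⟩ := hs
  nlinarith [sq_nonneg (r - s), sq_nonneg (r + s)]

lemma key1 {r s : ℝ} (hr : r ∈ Icc (0:ℝ) 1) (hs : s ∈ Icc (0:ℝ) 1) (h : 1/4 < r*s) :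
    (1-r)*(1-s) < 1/4 := by
  have h1 := key1' hr hs h
  obtain ⟨hr0, hr1⟩ := hr; obtain ⟨hs0, hs1⟩ := hs
  nlinarith [sq_nonneg (r - s)]

lemma key2' {r s : ℝ} (hr : r ∈ Icc (0:ℝ) 1) (hs : s ∈ Icc (0:ℝ) 1)
    (h : 1/4 < (1-r)*(1-s)) : r + s < 1 := by
  have := key1' (⟨by linarith [hr.2], by linarith [hr.1]⟩ : (1-r) ∈ Icc (0:ℝ) 1)
    (⟨by linarith [hs.2], by linarith [hs.1]⟩ : (1-s) ∈ Icc (0:ℝ) 1) h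
  linarith

lemma key2 {r s : ℝ} (hr : r ∈ Icc (0:ℝ) 1) (hs : s ∈ Icc (0:ℝ) 1)
    (h : 1/4 < (1-r)*(1-s)) : r*s < 1/4 := by
  have := key1 (⟨by linarith [hr.2], by linarith [hr.1]⟩ : (1-r) ∈ Icc (0:ℝ) 1)
    (⟨by linarith [hs.2], by linarith [hs.1]⟩ : (1-s) ∈ Icc (0:ℝ) 1) h
  nlinarith

lemma g_mem {r s : ℝ} (hr : r ∈ Icc (0:ℝ) 1) (hs : s ∈ Icc (0:ℝ) 1) :
    g r s ∈ Icc (0:ℝ) 1 := by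
  have hr' := hr; have hs' := hs
  obtain ⟨hr0, hr1⟩ := hr'; obtain ⟨hs0, hs1⟩ := hs'
  rw [g]
  split_ifs with h1 h2
  · have hb := key1 hr hs h1
    have hd := key1' hr hs h1
    constructor
    · apply div_nonneg _ (by linarith)
      nlinarith
    · rw [div_le_one (by linarith)]; nlinarith
  · have ha := key2 hr hs h2
    have hd := key2' hr hs h2
    constructor
    · apply div_nonneg (by linarith) (by linarith)
    · rw [div_le_one (by linarith)]; nlinarith
  · norm_num

lemma g_meas (r : ℝ) : Measurable (g r) := by
  unfold g
  apply Measurable.ite (measurableSet_lt measurable_const (by fun_prop))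
  · fun_prop
  · apply Measurable.ite (measurableSet_lt measurable_const (by fun_prop)) <;> fun_prop

lemma slice_vol {r s : ℝ} (hr : r ∈ Icc (0:ℝ) 1) (hs : s ∈ Icc (0:ℝ) 1) :
    volume {t : ℝ | t ∈ Icc (0:ℝ) 1 ∧ r*s*t + (1-r)*(1-s)*(1-t) ≤ 1/4}
      = ENNReal.ofReal (g r s) := by
  have hr' := hr; have hs' := hs
  obtain ⟨hr0, hr1⟩ := hr'; obtain ⟨hs0, hs1⟩ := hs'
  have hset : {t : ℝ | t ∈ Icc (0:ℝ) 1 ∧ r*s*t + (1-r)*(1-s)*(1-t) ≤ 1/4}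
      = {t : ℝ | t ∈ Icc (0:ℝ) 1 ∧ t * (r+s-1) ≤ 1/4 - (1-r)*(1-s)} := by
    ext t
    simp only [mem_setOf_eq, and_congr_right_iff]
    intro _
    have key : r*s*t + (1-r)*(1-s)*(1-t) - 1/4 = t*(r+s-1) - (1/4 - (1-r)*(1-s)) := by ring
    constructor <;> intro hq <;> linarith
  rw [hset]
  rcases lt_trichotomy (r+s-1) 0 with hdlt | hdeq | hdgt
  · have hrs : ¬ (1/4 < r * s) := fun hc => by have := key1' hr hs hc; linarith
    have hset2 : {t : ℝ | t ∈ Icc (0:ℝ) 1 ∧ t * (r+s-1) ≤ 1/4 - (1-r)*(1-s)}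
        = Icc (max 0 ((1/4 - (1-r)*(1-s))/(r+s-1))) 1 := by
      ext t
      simp only [mem_setOf_eq, mem_Icc, max_le_iff]
      constructor
      · rintro ⟨⟨h0, h1⟩, h2⟩
        exact ⟨⟨h0, (div_le_iff_of_neg hdlt).mpr h2⟩, h1⟩
      · rintro ⟨⟨h0, hm⟩, h1⟩
        exact ⟨⟨h0, h1⟩, (div_le_iff_of_neg hdlt).mp hm⟩
    rw [hset2, Real.volume_Icc]
    congr 1
    by_cases hb : 1/4 < (1-r)*(1-s)
    · rw [g, if_neg hrs, if_pos hb]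
      have hm0 : 0 < (1/4 - (1-r)*(1-s))/(r+s-1) := div_pos_of_neg_of_neg (by linarith) hdlt
      rw [max_eq_right hm0.le]
      have hne : (1:ℝ)-r-s ≠ 0 := by intro hc; apply hdlt.ne; linarith
      have hd : (1/4 - (1-r)*(1-s))/(r+s-1) = ((1-r)*(1-s) - 1/4)/(1-r-s) := by
        rw [div_eq_div_iff (by linarith) hne]; ring
      rw [hd]
      field_simp
      ring
    · rw [g, if_neg hrs, if_neg hb]
      have hm : (1/4 - (1-r)*(1-s))/(r+s-1) ≤ 0 :=
        div_nonpos_of_nonneg_of_nonpos (by linarith [not_lt.1 hb]) hdlt.le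
      rw [max_eq_left hm]; norm_num
  · have hrs : ¬ (1/4 < r * s) := fun hc => by have := key1' hr hs hc; linarith
    have hb : ¬ (1/4 < (1-r)*(1-s)) := fun hc => by have := key2' hr hs hc; linarith
    have hset2 : {t : ℝ | t ∈ Icc (0:ℝ) 1 ∧ t * (r+s-1) ≤ 1/4 - (1-r)*(1-s)}
        = Icc (0:ℝ) 1 := by
      ext t
      simp only [mem_setOf_eq, mem_Icc]
      constructor
      · rintro ⟨h, _⟩; exact h
      · intro ht
        refine ⟨ht, ?_⟩
        rw [hdeq, mul_zero]
        linarith [not_lt.1 hb]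
    rw [hset2, Real.volume_Icc, g, if_neg hrs, if_neg hb]
    norm_num
  · have hset2 : {t : ℝ | t ∈ Icc (0:ℝ) 1 ∧ t * (r+s-1) ≤ 1/4 - (1-r)*(1-s)}
        = Icc (0:ℝ) (min 1 ((1/4 - (1-r)*(1-s))/(r+s-1))) := by
      ext t
      simp only [mem_setOf_eq, mem_Icc, le_min_iff]
      constructor
      · rintro ⟨⟨h0, h1⟩, h2⟩
        exact ⟨h0, h1, (le_div_iff₀ hdgt).mpr h2⟩
      · rintro ⟨h0, h1, hm⟩
        exact ⟨⟨h0, h1⟩, (le_div_iff₀ hdgt).mp hm⟩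
    rw [hset2, Real.volume_Icc]
    congr 1
    by_cases hrs : 1/4 < r*s
    · have hb := key1 hr hs hrs
      rw [g, if_pos hrs]
      have hm1 : (1/4 - (1-r)*(1-s))/(r+s-1) ≤ 1 := by
        rw [div_le_one hdgt]; nlinarith
      rw [min_eq_right hm1]
      field_simp
      ring
    · have hb : ¬ (1/4 < (1-r)*(1-s)) := fun hc => by have := key2' hr hs hc; linarith
      rw [g, if_neg hrs, if_neg hb]
      have hm1 : 1 ≤ (1/4 - (1-r)*(1-s))/(r+s-1) := by
        rw [le_div_iff₀ hdgt]; nlinarith [not_lt.1 hrs]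
      rw [min_eq_left hm1]; norm_num








noncomputable def P2 (r s : ℝ) : ℝ := -(r-1/2)^2 * Real.log (4*(1-r)*(1-r-s)) + r*s
noncomputable def P1 (r s : ℝ) : ℝ := (1-r)*s + (r-1/2)^2 * Real.log (4*r*(r+s-1))

noncomputable def s0 (r : ℝ) : ℝ := (3-4*r)/(4*(1-r))
noncomputable def s1 (r : ℝ) : ℝ := 1/(4*r)

lemma integral_congr_Ioo {f g : ℝ → ℝ} {a b : ℝ} (hab : a ≤ b)
    (h : ∀ x ∈ Ioo a b, f x = g x) :
    ∫ x in a..b, f x = ∫ x in a..b, g x := by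
  apply intervalIntegral.integral_congr_ae
  have hb : ∀ᵐ x : ℝ ∂volume, x ≠ b := by
    rw [ae_iff]
    simpa using Real.volume_singleton
  filter_upwards [hb] with x hx hmem
  rw [Set.uIoc_of_le hab] at hmem
  exact h x ⟨hmem.1, lt_of_le_of_ne hmem.2 hx⟩

lemma intervalIntegrable_congr_Ioo {f g : ℝ → ℝ} {a b : ℝ} (hab : a ≤ b)
    (h : ∀ x ∈ Ioo a b, f x = g x) (hf : IntervalIntegrable f volume a b) :
    IntervalIntegrable g volume a b := by
  rw [intervalIntegrable_iff_integrableOn_Ioo_of_le hab] at hf ⊢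
  exact hf.congr_fun h measurableSet_Ioo

lemma integral_f2 {r α β : ℝ} (hr1 : r < 1) (hβ : 0 < 1 - r - β) (hab : α ≤ β) :
    ∫ s in α..β, (1/4 - r*s)/(1-r-s) = P2 r β - P2 r α := by
  have h1r : (0:ℝ) < 1 - r := by linarith
  apply intervalIntegral.integral_eq_sub_of_hasDerivAt
  · intro s hs
    rw [uIcc_of_le hab, mem_Icc] at hs
    have hpos : 0 < 1 - r - s := by linarith [hs.2]
    have hu : HasDerivAt (fun s : ℝ => 4*(1-r)*(1-r-s)) (4*(1-r)*(0-1)) s := by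
      exact ((hasDerivAt_const s (1-r)).sub (hasDerivAt_id s)).const_mul (4*(1-r))
    have hlog : HasDerivAt (fun s : ℝ => Real.log (4*(1-r)*(1-r-s)))
        ((4*(1-r)*(0-1))/(4*(1-r)*(1-r-s))) s :=
      hu.log (by exact (mul_pos (by linarith : (0:ℝ) < 4*(1-r)) hpos).ne')
    have hmul : HasDerivAt (fun s : ℝ => r*s) (r*1) s :=
      (hasDerivAt_id s).const_mul r
    have := (hlog.const_mul (-(r-1/2)^2)).add hmul
    convert this using 1
    · rfl
    field_simp
    ring
  · apply ContinuousOn.intervalIntegrable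
    apply ContinuousOn.div (by fun_prop) (by fun_prop)
    intro s hs
    rw [uIcc_of_le hab, mem_Icc] at hs
    have : 0 < 1 - r - s := by linarith [hs.2]
    exact this.ne'

lemma integral_f1 {r α β : ℝ} (hr0 : 0 < r) (hα : 0 < r + α - 1) (hab : α ≤ β) :
    ∫ s in α..β, (r + s - r*s - 3/4)/(r + s - 1) = P1 r β - P1 r α := by
  apply intervalIntegral.integral_eq_sub_of_hasDerivAt
  · intro s hs
    rw [uIcc_of_le hab, mem_Icc] at hs
    have hpos : 0 < r + s - 1 := by linarith [hs.1]
    have hu : HasDerivAt (fun s : ℝ => 4*r*(r+s-1)) (4*r*1) s := by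
      exact (((hasDerivAt_id s).const_add r).sub_const 1).const_mul (4*r)
    have hlog : HasDerivAt (fun s : ℝ => Real.log (4*r*(r+s-1)))
        ((4*r*1)/(4*r*(r+s-1))) s :=
      hu.log (by exact (mul_pos (by linarith : (0:ℝ) < 4*r) hpos).ne')
    have hmul : HasDerivAt (fun s : ℝ => (1-r)*s) ((1-r)*1) s :=
      (hasDerivAt_id s).const_mul (1-r)
    have := hmul.add (hlog.const_mul ((r-1/2)^2))
    convert this using 1
    · rfl
    field_simp
    ring
  · apply ContinuousOn.intervalIntegrable
    apply ContinuousOn.div (by fun_prop) (by fun_prop)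
    intro s hs
    rw [uIcc_of_le hab, mem_Icc] at hs
    have : 0 < r + s - 1 := by linarith [hs.1]
    exact this.ne'

lemma s0_denom {r : ℝ} (hr1 : r < 1) (hr2 : r ≠ 1/2) : 0 < 1 - r - s0 r := by
  have h2 : 1 - r - s0 r = (1-2*r)^2/(4*(1-r)) := by
    have hne : (1:ℝ) - r ≠ 0 := sub_ne_zero_of_ne (Ne.symm hr1.ne)
    rw [s0]; field_simp; ring
  rw [h2]
  have hne : 1-2*r ≠ 0 := fun hc => hr2 (by linarith)
  exact div_pos (by positivity) (by linarith)

lemma s1_denom {r : ℝ} (hr0 : 0 < r) (hr2 : r ≠ 1/2) : 0 < r + s1 r - 1 := by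
  have h2 : r + s1 r - 1 = (2*r-1)^2/(4*r) := by
    rw [s1]; field_simp; ring
  rw [h2]
  have hne : 2*r - 1 ≠ 0 := fun hc => hr2 (by linarith)
  exact div_pos (by positivity) (by linarith)


lemma s0_lt {r : ℝ} (hr1 : r < 1) {s : ℝ} (hs : s < s0 r) : 1/4 < (1-r)*(1-s) := by
  have h4 : (0:ℝ) < 4*(1-r) := by linarith
  rw [s0] at hs
  have := (lt_div_iff₀ h4).mp hs
  nlinarith

lemma s0_gt {r : ℝ} (hr1 : r < 1) {s : ℝ} (hs : s0 r < s) : (1-r)*(1-s) < 1/4 := by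
  have h4 : (0:ℝ) < 4*(1-r) := by linarith
  rw [s0] at hs
  have := (div_lt_iff₀ h4).mp hs
  nlinarith

lemma s1_lt {r : ℝ} (hr0 : 0 < r) {s : ℝ} (hs : s < s1 r) : r*s < 1/4 := by
  have h4 : (0:ℝ) < 4*r := by linarith
  rw [s1] at hs
  have := (lt_div_iff₀ h4).mp hs
  nlinarith

lemma s1_gt {r : ℝ} (hr0 : 0 < r) {s : ℝ} (hs : s1 r < s) : 1/4 < r*s := by
  have h4 : (0:ℝ) < 4*r := by linarith
  rw [s1] at hs
  have := (div_lt_iff₀ h4).mp hs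
  nlinarith

lemma innerA {r : ℝ} (h0 : 0 < r) (h4 : r < 1/4) :
    ∫ s in (0:ℝ)..1, g r s = h r := by
  have hr1 : r < 1 := by linarith
  have hrhalf : r ≠ 1/2 := by intro hc; rw [hc] at h4; norm_num at h4
  have h1r : (0:ℝ) < 1-r := by linarith
  have hs00 : 0 < s0 r := by
    rw [s0]; exact div_pos (by linarith) (by linarith)
  have hs01 : s0 r < 1 := by
    rw [s0, div_lt_one (by linarith)]; linarith
  have e2 : ∀ x ∈ Ioo 0 (s0 r), g r x = (1/4 - r*x)/(1-r-x) := by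
    intro x hx
    have hx1 : x < 1 := hx.2.trans hs01
    have hc1 : ¬ (1/4 < r*x) := by push_neg; nlinarith [hx.1]
    rw [g, if_neg hc1, if_pos (s0_lt hr1 hx.2)]
  have e1 : ∀ x ∈ Ioo (s0 r) 1, g r x = 1 := by
    intro x hx
    have hc1 : ¬ (1/4 < r*x) := by push_neg; nlinarith [hx.1, hx.2, hs00]
    rw [g, if_neg hc1, if_neg (not_lt.2 (s0_gt hr1 hx.1).le)]
  have hden := s0_denom hr1 hrhalf
  have hif2 : IntervalIntegrable (fun x => (1/4 - r*x)/(1-r-x)) volume 0 (s0 r) := by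
    apply ContinuousOn.intervalIntegrable
    apply ContinuousOn.div (by fun_prop) (by fun_prop)
    intro x hx
    rw [uIcc_of_le hs00.le, mem_Icc] at hx
    have : 0 < 1-r-x := by linarith [hx.2]
    exact this.ne'
  have hig2 := intervalIntegrable_congr_Ioo hs00.le (fun x hx => (e2 x hx).symm) hif2
  have hig1 := intervalIntegrable_congr_Ioo hs01.le (fun x hx => (e1 x hx).symm)
    intervalIntegrable_const
  rw [← intervalIntegral.integral_add_adjacent_intervals hig2 hig1,
    integral_congr_Ioo hs00.le e2, integral_congr_Ioo hs01.le e1,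
    integral_f2 hr1 hden hs00.le, intervalIntegral.integral_const]
  simp only [P2, smul_eq_mul, mul_one]
  have k1 : 4*(1-r)*(1-r-s0 r) = (1-2*r)^2 := by rw [s0]; field_simp; ring
  have k2 : 4*(1-r)*(1-r-(0:ℝ)) = (2-2*r)^2 := by ring
  rw [k1, k2, h, if_pos h4.le, s0]
  field_simp
  ring

lemma innerB {r : ℝ} (ha : 1/4 < r) (hb : r < 3/4) (hc : r ≠ 1/2) :
    ∫ s in (0:ℝ)..1, g r s = h r := by
  have h0 : (0:ℝ) < r := by linarith
  have hr1 : r < 1 := by linarith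
  have h1r : (0:ℝ) < 1-r := by linarith
  have hs00 : 0 ≤ s0 r := by
    rw [s0]; exact div_nonneg (by linarith) (by linarith)
  have hs0lt : s0 r < 1 := by
    rw [s0, div_lt_one (by linarith)]; linarith
  have hs10 : 0 < s1 r := by
    rw [s1]; exact div_pos one_pos (by linarith)
  have hs11 : s1 r ≤ 1 := by
    rw [s1, div_le_one (by linarith)]; linarith
  have hs01 : s0 r ≤ s1 r := by
    have hk : s1 r - s0 r = (2*r-1)^2/(4*r*(1-r)) := by
      rw [s0, s1]; field_simp; ring
    have h2 : (0:ℝ) ≤ (2*r-1)^2/(4*r*(1-r)) := by positivity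
    linarith
  have e2 : ∀ x ∈ Ioo 0 (s0 r), g r x = (1/4 - r*x)/(1-r-x) := by
    intro x hx
    have hbb := s0_lt hr1 hx.2
    have hc1 : ¬ (1/4 < r*x) := not_lt.2
      (key2 ⟨h0.le, hr1.le⟩ ⟨hx.1.le, (hx.2.trans hs0lt).le⟩ hbb).le
    rw [g, if_neg hc1, if_pos hbb]
  have e1 : ∀ x ∈ Ioo (s0 r) (s1 r), g r x = 1 := by
    intro x hx
    rw [g, if_neg (not_lt.2 (s1_lt h0 hx.2).le), if_neg (not_lt.2 (s0_gt hr1 hx.1).le)]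
  have e0 : ∀ x ∈ Ioo (s1 r) 1, g r x = (r + x - r*x - 3/4)/(r + x - 1) := by
    intro x hx
    rw [g, if_pos (s1_gt h0 hx.1)]
  have hden2 := s0_denom hr1 hc
  have hden1 := s1_denom h0 hc
  have hif2 : IntervalIntegrable (fun x => (1/4 - r*x)/(1-r-x)) volume 0 (s0 r) := by
    apply ContinuousOn.intervalIntegrable
    apply ContinuousOn.div (by fun_prop) (by fun_prop)
    intro x hx
    rw [uIcc_of_le hs00, mem_Icc] at hx
    have : 0 < 1-r-x := by linarith [hx.2]
    exact this.ne'
  have hif0 : IntervalIntegrable (fun x => (r + x - r*x - 3/4)/(r + x - 1)) volume (s1 r) 1 := by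
    apply ContinuousOn.intervalIntegrable
    apply ContinuousOn.div (by fun_prop) (by fun_prop)
    intro x hx
    rw [uIcc_of_le hs11, mem_Icc] at hx
    have : 0 < r + x - 1 := by linarith [hx.1]
    exact this.ne'
  have hig2 := intervalIntegrable_congr_Ioo hs00 (fun x hx => (e2 x hx).symm) hif2
  have hig1 := intervalIntegrable_congr_Ioo hs01 (fun x hx => (e1 x hx).symm)
    intervalIntegrable_const
  have hig0 := intervalIntegrable_congr_Ioo hs11 (fun x hx => (e0 x hx).symm) hif0
  rw [← intervalIntegral.integral_add_adjacent_intervals (hig2.trans hig1) hig0,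
    ← intervalIntegral.integral_add_adjacent_intervals hig2 hig1,
    integral_congr_Ioo hs00 e2, integral_congr_Ioo hs01 e1, integral_congr_Ioo hs11 e0,
    integral_f2 hr1 hden2 hs00, integral_f1 h0 hden1 hs11,
    intervalIntegral.integral_const]
  simp only [P1, P2, smul_eq_mul, mul_one]
  have k1 : 4*(1-r)*(1-r-s0 r) = (1-2*r)^2 := by rw [s0]; field_simp; ring
  have k2 : 4*(1-r)*(1-r-(0:ℝ)) = (2-2*r)^2 := by ring
  have k3 : 4*r*(r+1-1) = (2*r)^2 := by ring
  have k4 : 4*r*(r+s1 r-1) = (2*r-1)^2 := by rw [s1]; field_simp; ring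
  rw [k1, k2, k3, k4, show ((1:ℝ)-2*r)^2 = (2*r-1)^2 by ring, h,
    if_neg (not_le.2 ha), if_pos hb.le, s0, s1]
  field_simp
  ring

lemma innerC {r : ℝ} (ha : 3/4 < r) (hb : r < 1) :
    ∫ s in (0:ℝ)..1, g r s = h r := by
  have h0 : (0:ℝ) < r := by linarith
  have hc : r ≠ 1/2 := by intro hcc; rw [hcc] at ha; norm_num at ha
  have hs10 : 0 < s1 r := by
    rw [s1]; exact div_pos one_pos (by linarith)
  have hs11 : s1 r < 1 := by
    rw [s1, div_lt_one (by linarith)]; linarith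
  have e1 : ∀ x ∈ Ioo 0 (s1 r), g r x = 1 := by
    intro x hx
    have hc2 : ¬ (1/4 < (1-r)*(1-x)) := by
      push_neg
      nlinarith [hx.1, hx.2.trans hs11]
    rw [g, if_neg (not_lt.2 (s1_lt h0 hx.2).le), if_neg hc2]
  have e0 : ∀ x ∈ Ioo (s1 r) 1, g r x = (r + x - r*x - 3/4)/(r + x - 1) := by
    intro x hx
    rw [g, if_pos (s1_gt h0 hx.1)]
  have hden1 := s1_denom h0 hc
  have hif0 : IntervalIntegrable (fun x => (r + x - r*x - 3/4)/(r + x - 1)) volume (s1 r) 1 := by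
    apply ContinuousOn.intervalIntegrable
    apply ContinuousOn.div (by fun_prop) (by fun_prop)
    intro x hx
    rw [uIcc_of_le hs11.le, mem_Icc] at hx
    have : 0 < r + x - 1 := by linarith [hx.1]
    exact this.ne'
  have hig1 := intervalIntegrable_congr_Ioo hs10.le (fun x hx => (e1 x hx).symm)
    intervalIntegrable_const
  have hig0 := intervalIntegrable_congr_Ioo hs11.le (fun x hx => (e0 x hx).symm) hif0
  rw [← intervalIntegral.integral_add_adjacent_intervals hig1 hig0,
    integral_congr_Ioo hs10.le e1, integral_congr_Ioo hs11.le e0,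
    integral_f1 h0 hden1 hs11.le, intervalIntegral.integral_const]
  simp only [P1, smul_eq_mul, mul_one]
  have k3 : 4*r*(r+1-1) = (2*r)^2 := by ring
  have k4 : 4*r*(r+s1 r-1) = (2*r-1)^2 := by rw [s1]; field_simp; ring
  rw [k3, k4, h, if_neg (not_le.2 (by linarith : (1:ℝ)/4 < r)),
    if_neg (not_le.2 ha), s1]
  field_simp
  ring

lemma inner_eq {r : ℝ} (h0 : 0 < r) (h1 : r < 1) (ha : r ≠ 1/4) (hb : r ≠ 1/2)
    (hcc : r ≠ 3/4) : ∫ s in (0:ℝ)..1, g r s = h r := by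
  rcases lt_trichotomy r (1/4) with hh|hh|hh
  · exact innerA h0 hh
  · exact absurd hh ha
  · rcases lt_trichotomy r (3/4) with hh'|hh'|hh'
    · exact innerB hh hh' hb
    · exact absurd hh' hcc
    · exact innerC hh' h1








noncomputable def T1 (r : ℝ) : ℝ :=
  -((1-2*r)^2/12 * ((1-2*r)*Real.log (1-2*r))) + (1-2*r)^3/36
noncomputable def T4 (r : ℝ) : ℝ :=
  (2*r-1)^2/12 * ((2*r-1)*Real.log (2*r-1)) - (2*r-1)^3/36
noncomputable def T3 (r : ℝ) : ℝ :=
  (1/4)*((2*r)^2/3*((2*r)*Real.log (2*r)) - (2*r)^3/9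
    - (2*r)*((2*r)*Real.log (2*r)) + (2*r)^2/2 + (2*r)*Real.log (2*r) - 2*r)
noncomputable def T2 (r : ℝ) : ℝ :=
  -(1/4)*((2-2*r)^2/3*((2-2*r)*Real.log (2-2*r)) - (2-2*r)^3/9
    - (2-2*r)*((2-2*r)*Real.log (2-2*r)) + (2-2*r)^2/2 + (2-2*r)*Real.log (2-2*r) - (2-2*r))
noncomputable def HA (r : ℝ) : ℝ := r/4 + r^2/2 + T2 r - T1 r
noncomputable def HB (r : ℝ) : ℝ := r/2 + T3 r + T2 r - 2*T4 r
noncomputable def HC (r : ℝ) : ℝ := 5*r/4 - r^2/2 + T3 r - T4 r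

noncomputable def hB' (r : ℝ) : ℝ :=
  1/2 + (r-1/2)^2*(Real.log ((2*r)^2) + Real.log ((2-2*r)^2))
    - (2*r-1)*((2*r-1)*Real.log (2*r-1))

lemma hB'_eq {x : ℝ} (h1 : 1/4 < x) (h2 : x ≤ 3/4) : h x = hB' x := by
  rw [h, if_neg (not_le.2 h1), if_pos h2, hB']
  simp only [Real.log_pow]
  push_cast
  ring

lemma had1 (x : ℝ) : HasDerivAt (fun r : ℝ => 1-2*r) (-2) x := by
  simpa using ((hasDerivAt_id x).const_mul 2).const_sub (1:ℝ)

lemma had4 (x : ℝ) : HasDerivAt (fun r : ℝ => 2*r-1) 2 x := by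
  simpa using ((hasDerivAt_id x).const_mul 2).sub_const 1

lemma had3 (x : ℝ) : HasDerivAt (fun r : ℝ => 2*r) 2 x := by
  simpa using (hasDerivAt_id x).const_mul 2

lemma had2 (x : ℝ) : HasDerivAt (fun r : ℝ => 2-2*r) (-2) x := by
  simpa using ((hasDerivAt_id x).const_mul 2).const_sub (2:ℝ)

lemma hml1 {x : ℝ} (hx : 1-2*x ≠ 0) :
    HasDerivAt (fun r : ℝ => (1-2*r)*Real.log (1-2*r)) ((Real.log (1-2*x)+1)*(-2)) x := by
  simpa [Function.comp_def] using (Real.hasDerivAt_mul_log hx).comp x (had1 x)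

lemma hml4 {x : ℝ} (hx : 2*x-1 ≠ 0) :
    HasDerivAt (fun r : ℝ => (2*r-1)*Real.log (2*r-1)) ((Real.log (2*x-1)+1)*2) x := by
  simpa [Function.comp_def] using (Real.hasDerivAt_mul_log hx).comp x (had4 x)

lemma hml3 {x : ℝ} (hx : 2*x ≠ 0) :
    HasDerivAt (fun r : ℝ => (2*r)*Real.log (2*r)) ((Real.log (2*x)+1)*2) x := by
  simpa [Function.comp_def] using (Real.hasDerivAt_mul_log hx).comp x (had3 x)

lemma hml2 {x : ℝ} (hx : 2-2*x ≠ 0) :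
    HasDerivAt (fun r : ℝ => (2-2*r)*Real.log (2-2*r)) ((Real.log (2-2*x)+1)*(-2)) x := by
  simpa [Function.comp_def] using (Real.hasDerivAt_mul_log hx).comp x (had2 x)

lemma hasDerivAt_T1 {x : ℝ} (hx : 1-2*x ≠ 0) :
    HasDerivAt T1 ((2*x-1)^2/2 * Real.log (1-2*x)) x := by
  unfold T1
  have h1 := (((had1 x).pow 2).div_const 12).mul (hml1 hx)
  have h2 := ((had1 x).pow 3).div_const 36
  convert h1.neg.add h2 using 1
  · rfl
  · rfl
  · rfl
  push_cast [Pi.pow_apply]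
  ring

lemma hasDerivAt_T4 {x : ℝ} (hx : 2*x-1 ≠ 0) :
    HasDerivAt T4 ((2*x-1)^2/2 * Real.log (2*x-1)) x := by
  unfold T4
  have h1 := (((had4 x).pow 2).div_const 12).mul (hml4 hx)
  have h2 := ((had4 x).pow 3).div_const 36
  convert h1.sub h2 using 1
  · rfl
  · rfl
  · rfl
  push_cast [Pi.pow_apply]
  ring

lemma hasDerivAt_T3 {x : ℝ} (hx : 2*x ≠ 0) :
    HasDerivAt T3 ((2*x-1)^2/2 * Real.log (2*x)) x := by
  unfold T3
  have h1 := (((had3 x).pow 2).div_const 3).mul (hml3 hx)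
  have h2 := ((had3 x).pow 3).div_const 9
  have h3 := (had3 x).mul (hml3 hx)
  have h4 := ((had3 x).pow 2).div_const 2
  have h5 := hml3 hx
  have h6 := had3 x
  convert (((((h1.sub h2).sub h3).add h4).add h5).sub h6).const_mul (1/4) using 1
  · rfl
  · rfl
  · rfl
  push_cast [Pi.pow_apply]
  ring

lemma hasDerivAt_T2 {x : ℝ} (hx : 2-2*x ≠ 0) :
    HasDerivAt T2 ((2*x-1)^2/2 * Real.log (2-2*x)) x := by
  unfold T2
  have h1 := (((had2 x).pow 2).div_const 3).mul (hml2 hx)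
  have h2 := ((had2 x).pow 3).div_const 9
  have h3 := (had2 x).mul (hml2 hx)
  have h4 := ((had2 x).pow 2).div_const 2
  have h5 := hml2 hx
  have h6 := had2 x
  convert (((((h1.sub h2).sub h3).add h4).add h5).sub h6).const_mul (-(1/4)) using 1
  · rfl
  · rfl
  · rfl
  push_cast [Pi.pow_apply]
  ring

lemma hasDerivAt_HA {x : ℝ} (h1 : 1-2*x ≠ 0) (h2 : 2-2*x ≠ 0) :
    HasDerivAt HA (1/4 + x + (x-1/2)^2 * (Real.log ((2-2*x)^2) - Real.log ((1-2*x)^2))) x := by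
  unfold HA
  have ha := ((hasDerivAt_id x).div_const 4).add ((hasDerivAt_pow 2 x).div_const 2)
  convert (ha.add (hasDerivAt_T2 h2)).sub (hasDerivAt_T1 h1) using 1
  · rfl
  · rfl
  · rfl
  simp only [Real.log_pow]
  push_cast
  ring

lemma hasDerivAt_HB {x : ℝ} (h4 : 2*x-1 ≠ 0) (h3 : 2*x ≠ 0) (h2 : 2-2*x ≠ 0) :
    HasDerivAt HB (hB' x) x := by
  unfold HB hB'
  have ha := (hasDerivAt_id x).div_const 2
  convert ((ha.add (hasDerivAt_T3 h3)).add (hasDerivAt_T2 h2)).sub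
    ((hasDerivAt_T4 h4).const_mul 2) using 1
  · rfl
  · rfl
  · rfl
  simp only [Real.log_pow]
  push_cast
  ring

lemma hasDerivAt_HC {x : ℝ} (h4 : 2*x-1 ≠ 0) (h3 : 2*x ≠ 0) :
    HasDerivAt HC (5/4 - x + (x-1/2)^2 * (Real.log ((2*x)^2) - Real.log ((2*x-1)^2))) x := by
  unfold HC
  have ha := (((hasDerivAt_id x).const_mul 5).div_const 4).sub ((hasDerivAt_pow 2 x).div_const 2)
  convert (ha.add (hasDerivAt_T3 h3)).sub (hasDerivAt_T4 h4) using 1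
  · rfl
  · rfl
  · rfl
  simp only [Real.log_pow]
  push_cast
  ring

lemma contT1 : Continuous T1 := by
  unfold T1
  have hml : Continuous (fun r : ℝ => (1-2*r)*Real.log (1-2*r)) :=
    Real.continuous_mul_log.comp (by fun_prop)
  exact (((by fun_prop : Continuous fun r:ℝ => (1-2*r)^2/12).mul hml).neg).add (by fun_prop)

lemma contT4 : Continuous T4 := by
  unfold T4
  have hml : Continuous (fun r : ℝ => (2*r-1)*Real.log (2*r-1)) :=
    Real.continuous_mul_log.comp (by fun_prop)
  exact ((by fun_prop : Continuous fun r:ℝ => (2*r-1)^2/12).mul hml).sub (by fun_prop)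

lemma contT3 : Continuous T3 := by
  unfold T3
  have hml : Continuous (fun r : ℝ => (2*r)*Real.log (2*r)) :=
    Real.continuous_mul_log.comp (by fun_prop)
  apply Continuous.mul continuous_const
  exact ((((((by fun_prop : Continuous fun r:ℝ => (2*r)^2/3).mul hml).sub
    (by fun_prop)).sub ((by fun_prop : Continuous fun r:ℝ => (2*r)).mul hml)).add
    (by fun_prop)).add hml).sub (by fun_prop)

lemma contT2 : Continuous T2 := by
  unfold T2
  have hml : Continuous (fun r : ℝ => (2-2*r)*Real.log (2-2*r)) :=
    Real.continuous_mul_log.comp (by fun_prop)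
  apply Continuous.mul continuous_const
  exact ((((((by fun_prop : Continuous fun r:ℝ => (2-2*r)^2/3).mul hml).sub
    (by fun_prop)).sub ((by fun_prop : Continuous fun r:ℝ => (2-2*r)).mul hml)).add
    (by fun_prop)).add hml).sub (by fun_prop)

lemma contHB : Continuous HB := by
  unfold HB
  exact (((by fun_prop : Continuous fun r:ℝ => r/2).add contT3).add contT2).sub
    (continuous_const.mul contT4)

lemma contOn_hB' : ContinuousOn hB' (Icc (1/4:ℝ) (3/4)) := by
  unfold hB'
  have hml : Continuous (fun r : ℝ => (2*r-1)*((2*r-1)*Real.log (2*r-1))) :=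
    (by fun_prop : Continuous fun r:ℝ => (2*r-1)).mul
      (Real.continuous_mul_log.comp (by fun_prop))
  apply ContinuousOn.sub _ hml.continuousOn
  apply ContinuousOn.add continuousOn_const
  apply ContinuousOn.mul (by fun_prop)
  apply ContinuousOn.add
  · apply ContinuousOn.log (by fun_prop)
    intro x hx
    rw [mem_Icc] at hx
    have : (0:ℝ) < 2*x := by linarith [hx.1]
    exact pow_ne_zero 2 this.ne'
  · apply ContinuousOn.log (by fun_prop)
    intro x hx
    rw [mem_Icc] at hx
    have : (0:ℝ) < 2-2*x := by linarith [hx.2]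
    exact pow_ne_zero 2 this.ne'

lemma hApiece : ∫ r in (0:ℝ)..(1/4), h r = HA (1/4) - HA 0 := by
  have e : ∀ x ∈ Ioo (0:ℝ) (1/4), h x
      = 1/4 + x + (x-1/2)^2 * (Real.log ((2-2*x)^2) - Real.log ((1-2*x)^2)) :=
    fun x hx => by rw [h, if_pos hx.2.le]
  rw [integral_congr_Ioo (by norm_num) e]
  apply intervalIntegral.integral_eq_sub_of_hasDerivAt
  · intro x hx
    rw [uIcc_of_le (by norm_num), mem_Icc] at hx
    exact hasDerivAt_HA (by linarith [hx.2] : (0:ℝ) < 1-2*x).ne'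
      (by linarith [hx.2] : (0:ℝ) < 2-2*x).ne'
  · apply ContinuousOn.intervalIntegrable
    apply ContinuousOn.add (by fun_prop)
    apply ContinuousOn.mul (by fun_prop)
    apply ContinuousOn.sub
    · apply ContinuousOn.log (by fun_prop)
      intro x hx
      rw [uIcc_of_le (by norm_num), mem_Icc] at hx
      have : (0:ℝ) < 2-2*x := by linarith [hx.2]
      exact pow_ne_zero 2 this.ne'
    · apply ContinuousOn.log (by fun_prop)
      intro x hx
      rw [uIcc_of_le (by norm_num), mem_Icc] at hx
      have : (0:ℝ) < 1-2*x := by linarith [hx.2]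
      exact pow_ne_zero 2 this.ne'

lemma hB1piece : ∫ r in (1/4:ℝ)..(1/2), h r = HB (1/2) - HB (1/4) := by
  rw [integral_congr_Ioo (by norm_num)
    (fun x hx => hB'_eq hx.1 (by linarith [hx.2] : x ≤ 3/4))]
  apply intervalIntegral.integral_eq_sub_of_hasDerivAt_of_le (by norm_num)
    contHB.continuousOn
  · intro x hx
    rw [mem_Ioo] at hx
    exact hasDerivAt_HB (by linarith [hx.2] : 2*x-1 < 0).ne
      (by linarith [hx.1] : (0:ℝ) < 2*x).ne' (by linarith [hx.2] : (0:ℝ) < 2-2*x).ne'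
  · apply ContinuousOn.intervalIntegrable
    apply contOn_hB'.mono
    rw [uIcc_of_le (by norm_num)]
    exact Icc_subset_Icc (le_refl _) (by norm_num)

lemma hB2piece : ∫ r in (1/2:ℝ)..(3/4), h r = HB (3/4) - HB (1/2) := by
  rw [integral_congr_Ioo (by norm_num)
    (fun x hx => hB'_eq (by linarith [hx.1] : 1/4 < x) hx.2.le)]
  apply intervalIntegral.integral_eq_sub_of_hasDerivAt_of_le (by norm_num)
    contHB.continuousOn
  · intro x hx
    rw [mem_Ioo] at hx
    exact hasDerivAt_HB (by linarith [hx.1] : (0:ℝ) < 2*x-1).ne'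
      (by linarith [hx.1] : (0:ℝ) < 2*x).ne' (by linarith [hx.2] : (0:ℝ) < 2-2*x).ne'
  · apply ContinuousOn.intervalIntegrable
    apply contOn_hB'.mono
    rw [uIcc_of_le (by norm_num)]
    exact Icc_subset_Icc (by norm_num) (le_refl _)

lemma hCpiece : ∫ r in (3/4:ℝ)..1, h r = HC 1 - HC (3/4) := by
  have e : ∀ x ∈ Ioo (3/4:ℝ) 1, h x
      = 5/4 - x + (x-1/2)^2 * (Real.log ((2*x)^2) - Real.log ((2*x-1)^2)) :=
    fun x hx => by rw [h, if_neg (not_le.2 (by linarith [hx.1] : (1:ℝ)/4 < x)),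
      if_neg (not_le.2 hx.1)]
  rw [integral_congr_Ioo (by norm_num) e]
  apply intervalIntegral.integral_eq_sub_of_hasDerivAt
  · intro x hx
    rw [uIcc_of_le (by norm_num), mem_Icc] at hx
    exact hasDerivAt_HC (by linarith [hx.1] : (0:ℝ) < 2*x-1).ne'
      (by linarith [hx.1] : (0:ℝ) < 2*x).ne'
  · apply ContinuousOn.intervalIntegrable
    apply ContinuousOn.add (by fun_prop)
    apply ContinuousOn.mul (by fun_prop)
    apply ContinuousOn.sub
    · apply ContinuousOn.log (by fun_prop)
      intro x hx
      rw [uIcc_of_le (by norm_num), mem_Icc] at hx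
      have : (0:ℝ) < 2*x := by linarith [hx.1]
      exact pow_ne_zero 2 this.ne'
    · apply ContinuousOn.log (by fun_prop)
      intro x hx
      rw [uIcc_of_le (by norm_num), mem_Icc] at hx
      have : (0:ℝ) < 2*x-1 := by linarith [hx.1]
      exact pow_ne_zero 2 this.ne'

lemma outer_val : ∫ r in (0:ℝ)..1, h r = 1/4*(1+Real.log 4) := by
  have iiA : IntervalIntegrable h volume 0 (1/4) := by
    apply intervalIntegrable_congr_Ioo (by norm_num)
      (fun x hx => (by rw [h, if_pos hx.2.le] :
        h x = 1/4 + x + (x-1/2)^2 * (Real.log ((2-2*x)^2) - Real.log ((1-2*x)^2))).symm)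
    apply ContinuousOn.intervalIntegrable
    apply ContinuousOn.add (by fun_prop)
    apply ContinuousOn.mul (by fun_prop)
    apply ContinuousOn.sub
    · apply ContinuousOn.log (by fun_prop)
      intro x hx
      rw [uIcc_of_le (by norm_num), mem_Icc] at hx
      have : (0:ℝ) < 2-2*x := by linarith [hx.2]
      exact pow_ne_zero 2 this.ne'
    · apply ContinuousOn.log (by fun_prop)
      intro x hx
      rw [uIcc_of_le (by norm_num), mem_Icc] at hx
      have : (0:ℝ) < 1-2*x := by linarith [hx.2]
      exact pow_ne_zero 2 this.ne'
  have iiB1 : IntervalIntegrable h volume (1/4) (1/2) := by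
    apply intervalIntegrable_congr_Ioo (by norm_num)
      (fun x hx => (hB'_eq hx.1 (by linarith [hx.2] : x ≤ 3/4)).symm)
    apply ContinuousOn.intervalIntegrable
    apply contOn_hB'.mono
    rw [uIcc_of_le (by norm_num)]
    exact Icc_subset_Icc (le_refl _) (by norm_num)
  have iiB2 : IntervalIntegrable h volume (1/2) (3/4) := by
    apply intervalIntegrable_congr_Ioo (by norm_num)
      (fun x hx => (hB'_eq (by linarith [hx.1] : 1/4 < x) hx.2.le).symm)
    apply ContinuousOn.intervalIntegrable
    apply contOn_hB'.mono
    rw [uIcc_of_le (by norm_num)]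
    exact Icc_subset_Icc (by norm_num) (le_refl _)
  have iiC : IntervalIntegrable h volume (3/4) 1 := by
    apply intervalIntegrable_congr_Ioo (by norm_num)
      (fun x hx => (by rw [h, if_neg (not_le.2 (by linarith [hx.1] : (1:ℝ)/4 < x)),
        if_neg (not_le.2 hx.1)] :
        h x = 5/4 - x + (x-1/2)^2 * (Real.log ((2*x)^2) - Real.log ((2*x-1)^2))).symm)
    apply ContinuousOn.intervalIntegrable
    apply ContinuousOn.add (by fun_prop)
    apply ContinuousOn.mul (by fun_prop)
    apply ContinuousOn.sub
    · apply ContinuousOn.log (by fun_prop)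
      intro x hx
      rw [uIcc_of_le (by norm_num), mem_Icc] at hx
      have : (0:ℝ) < 2*x := by linarith [hx.1]
      exact pow_ne_zero 2 this.ne'
    · apply ContinuousOn.log (by fun_prop)
      intro x hx
      rw [uIcc_of_le (by norm_num), mem_Icc] at hx
      have : (0:ℝ) < 2*x-1 := by linarith [hx.1]
      exact pow_ne_zero 2 this.ne'
  rw [← intervalIntegral.integral_add_adjacent_intervals ((iiA.trans iiB1).trans iiB2) iiC,
    ← intervalIntegral.integral_add_adjacent_intervals (iiA.trans iiB1) iiB2,
    ← intervalIntegral.integral_add_adjacent_intervals iiA iiB1,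
    hApiece, hB1piece, hB2piece, hCpiece]
  unfold HA HB HC T1 T2 T3 T4
  have l2 : Real.log (1/2 : ℝ) = -Real.log 2 := by
    rw [show (1/2:ℝ) = 2⁻¹ by norm_num, Real.log_inv]
  have lm2 : Real.log (-(1/2) : ℝ) = -Real.log 2 := by
    rw [Real.log_neg_eq_log, l2]
  have l32 : Real.log (3/2 : ℝ) = Real.log 3 - Real.log 2 :=
    Real.log_div (by norm_num) (by norm_num)
  have l4 : Real.log (4:ℝ) = 2*Real.log 2 := by
    rw [show (4:ℝ) = 2^2 by norm_num, Real.log_pow]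
    push_cast
    ring
  norm_num [l2, lm2, l32, l4, Real.log_one, Real.log_zero]
  ring_nf



lemma h_meas : Measurable h := by
  unfold h
  have m1 : Measurable fun x : ℝ => Real.log ((2-2*x)^2) :=
    Real.measurable_log.comp (by fun_prop)
  have m2 : Measurable fun x : ℝ => Real.log ((1-2*x)^2) :=
    Real.measurable_log.comp (by fun_prop)
  have m3 : Measurable fun x : ℝ => Real.log ((2*x)^2) :=
    Real.measurable_log.comp (by fun_prop)
  have m4 : Measurable fun x : ℝ => Real.log ((2*x-1)^2) :=
    Real.measurable_log.comp (by fun_prop)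
  have mq : Measurable fun x : ℝ => (x-1/2)^2 := by fun_prop
  apply Measurable.ite (measurableSet_le measurable_id measurable_const)
  · exact (measurable_const.add measurable_id).add (mq.mul (m1.sub m2))
  apply Measurable.ite (measurableSet_le measurable_id measurable_const)
  · exact measurable_const.add (mq.mul ((m3.add m1).sub (measurable_const.mul m4)))
  · exact (measurable_const.sub measurable_id).add (mq.mul (m3.sub m4))

end CdfAux

open CdfAux

theorem cdf_at_quarter :
    (volume {p : ℝ × ℝ × ℝ | p ∈ Set.Icc (0:ℝ) 1 ×ˢ Set.Icc (0:ℝ) 1 ×ˢ Set.Icc (0:ℝ) 1 ∧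
        p.1 * p.2.1 * p.2.2 + (1 - p.1) * (1 - p.2.1) * (1 - p.2.2) ≤ 1 / 4}).toReal =
      (1 / 4) * (1 + Real.log 4) := by
  set S := {p : ℝ × ℝ × ℝ | p ∈ Set.Icc (0:ℝ) 1 ×ˢ Set.Icc (0:ℝ) 1 ×ˢ Set.Icc (0:ℝ) 1 ∧
        p.1 * p.2.1 * p.2.2 + (1 - p.1) * (1 - p.2.1) * (1 - p.2.2) ≤ 1 / 4} with hSdef
  have hSmeas : MeasurableSet S := by
    have hS2 : S = (Set.Icc (0:ℝ) 1 ×ˢ Set.Icc (0:ℝ) 1 ×ˢ Set.Icc (0:ℝ) 1) ∩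
        {p : ℝ × ℝ × ℝ |
          p.1 * p.2.1 * p.2.2 + (1 - p.1) * (1 - p.2.1) * (1 - p.2.2) ≤ 1 / 4} := rfl
    rw [hS2]
    exact (measurableSet_Icc.prod (measurableSet_Icc.prod measurableSet_Icc)).inter
      (measurableSet_le (by fun_prop) measurable_const)
  have key : volume S = ENNReal.ofReal ((1/4)*(1 + Real.log 4)) := by
    rw [MeasureTheory.Measure.volume_eq_prod, Measure.prod_apply hSmeas]
    have hsec : ∀ r : ℝ, MeasurableSet (Prod.mk r ⁻¹' S) :=
      fun r => hSmeas.preimage measurable_prodMk_left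
    have hE : ∀ᵐ r : ℝ ∂volume, r ∉ ({0, 1/4, 1/2, 3/4, 1} : Set ℝ) := by
      rw [ae_iff]
      have he : {a : ℝ | ¬ a ∉ ({0, 1/4, 1/2, 3/4, 1} : Set ℝ)}
          = ({0, 1/4, 1/2, 3/4, 1} : Set ℝ) := by ext a; simp only [Set.mem_setOf_eq, not_not]
      rw [he]
      exact Set.Finite.measure_zero (Set.toFinite _) volume
    have main : ∀ᵐ r : ℝ ∂volume,
        (volume : Measure (ℝ × ℝ)) (Prod.mk r ⁻¹' S)
          = Set.indicator (Icc (0:ℝ) 1) (fun r => ENNReal.ofReal (h r)) r := by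
      filter_upwards [hE] with r hrE
      simp only [mem_insert_iff, mem_singleton_iff, not_or] at hrE
      obtain ⟨hr0, hr14, hr12, hr34, hr1⟩ := hrE
      rw [MeasureTheory.Measure.volume_eq_prod, Measure.prod_apply (hsec r)]
      by_cases hr : r ∈ Icc (0:ℝ) 1
      · rw [indicator_of_mem hr]
        have hr' : r ∈ Ioo (0:ℝ) 1 :=
          ⟨lt_of_le_of_ne hr.1 (Ne.symm hr0), lt_of_le_of_ne hr.2 hr1⟩
        have hsl : ∀ s : ℝ, volume (Prod.mk s ⁻¹' (Prod.mk r ⁻¹' S))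
            = Set.indicator (Icc (0:ℝ) 1) (fun s => ENNReal.ofReal (g r s)) s := by
          intro s
          by_cases hs : s ∈ Icc (0:ℝ) 1
          · rw [indicator_of_mem hs]
            have hset : Prod.mk s ⁻¹' (Prod.mk r ⁻¹' S)
                = {t : ℝ | t ∈ Icc (0:ℝ) 1 ∧ r*s*t + (1-r)*(1-s)*(1-t) ≤ 1/4} := by
              ext t
              simp only [hSdef, mem_preimage, mem_setOf_eq, Set.mem_prod]
              constructor
              · rintro ⟨⟨_, _, ht⟩, hq⟩; exact ⟨ht, hq⟩
              · rintro ⟨ht, hq⟩; exact ⟨⟨hr, hs, ht⟩, hq⟩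
            rw [hset, slice_vol hr hs]
          · rw [indicator_of_notMem hs]
            have hset : Prod.mk s ⁻¹' (Prod.mk r ⁻¹' S) = (∅ : Set ℝ) := by
              ext t
              simp only [hSdef, mem_preimage, mem_setOf_eq, Set.mem_prod, mem_empty_iff_false,
                iff_false]
              rintro ⟨⟨_, hs', _⟩, _⟩
              exact hs hs'
            rw [hset]
            simp
        rw [lintegral_congr hsl, lintegral_indicator measurableSet_Icc]
        have hInt : IntegrableOn (g r) (Icc (0:ℝ) 1) volume := by
          apply Measure.integrableOn_of_bounded (M := 1)
            (by simp [Real.volume_Icc] : volume (Icc (0:ℝ) 1) ≠ ⊤)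
            (g_meas r).aestronglyMeasurable
          rw [ae_restrict_iff' measurableSet_Icc]
          filter_upwards with s hs
          have hgm := g_mem hr hs
          rw [Real.norm_eq_abs, abs_le]
          exact ⟨by linarith [hgm.1], hgm.2⟩
        have hnn : 0 ≤ᵐ[volume.restrict (Icc (0:ℝ) 1)] g r := by
          filter_upwards [ae_restrict_mem measurableSet_Icc] with s hs
          exact (g_mem hr hs).1
        rw [← ofReal_integral_eq_lintegral_ofReal hInt hnn]
        congr 1
        rw [integral_Icc_eq_integral_Ioc, ← intervalIntegral.integral_of_le zero_le_one]
        exact inner_eq hr'.1 hr'.2 hr14 hr12 hr34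
      · rw [indicator_of_notMem hr]
        have hz : ∀ s : ℝ, volume (Prod.mk s ⁻¹' (Prod.mk r ⁻¹' S)) = 0 := by
          intro s
          have hset : Prod.mk s ⁻¹' (Prod.mk r ⁻¹' S) = (∅ : Set ℝ) := by
            ext t
            simp only [hSdef, mem_preimage, mem_setOf_eq, Set.mem_prod, mem_empty_iff_false,
              iff_false]
            rintro ⟨⟨hr', _, _⟩, _⟩
            exact hr hr'
          rw [hset]
          simp
        rw [lintegral_congr hz]
        simp
    rw [lintegral_congr_ae main, lintegral_indicator measurableSet_Icc]
    have hInt : IntegrableOn h (Icc (0:ℝ) 1) volume := by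
      apply Measure.integrableOn_of_bounded (M := 1)
        (by simp [Real.volume_Icc] : volume (Icc (0:ℝ) 1) ≠ ⊤)
        h_meas.aestronglyMeasurable
      rw [ae_restrict_iff' measurableSet_Icc]
      filter_upwards [hE] with r hrE hr
      simp only [mem_insert_iff, mem_singleton_iff, not_or] at hrE
      obtain ⟨hr0, hr14, hr12, hr34, hr1⟩ := hrE
      have hr' : r ∈ Ioo (0:ℝ) 1 :=
        ⟨lt_of_le_of_ne hr.1 (Ne.symm hr0), lt_of_le_of_ne hr.2 hr1⟩
      rw [← inner_eq hr'.1 hr'.2 hr14 hr12 hr34, Real.norm_eq_abs, abs_le]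
      constructor
      · have : (0:ℝ) ≤ ∫ s in (0:ℝ)..1, g r s := by
          apply intervalIntegral.integral_nonneg zero_le_one
          intro s hs
          exact (g_mem hr hs).1
        linarith
      · calc ∫ s in (0:ℝ)..1, g r s ≤ ∫ _ in (0:ℝ)..1, (1:ℝ) := by
              apply intervalIntegral.integral_mono_on zero_le_one _ intervalIntegrable_const
              · intro s hs
                exact (g_mem hr hs).2
              · rw [intervalIntegrable_iff_integrableOn_Ioo_of_le zero_le_one]
                have : IntegrableOn (g r) (Icc (0:ℝ) 1) volume := by
                  apply Measure.integrableOn_of_bounded (M := 1)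
                    (by simp [Real.volume_Icc] : volume (Icc (0:ℝ) 1) ≠ ⊤)
                    (g_meas r).aestronglyMeasurable
                  rw [ae_restrict_iff' measurableSet_Icc]
                  filter_upwards with s hs
                  have hgm := g_mem hr hs
                  rw [Real.norm_eq_abs, abs_le]
                  exact ⟨by linarith [hgm.1], hgm.2⟩
                exact this.mono_set Ioo_subset_Icc_self
            _ = 1 := by simp
    have hnn : 0 ≤ᵐ[volume.restrict (Icc (0:ℝ) 1)] h := by
      filter_upwards [ae_restrict_mem measurableSet_Icc, ae_restrict_of_ae hE] with r hr hrE
      simp only [mem_insert_iff, mem_singleton_iff, not_or] at hrE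
      obtain ⟨hr0, hr14, hr12, hr34, hr1⟩ := hrE
      have hr' : r ∈ Ioo (0:ℝ) 1 :=
        ⟨lt_of_le_of_ne hr.1 (Ne.symm hr0), lt_of_le_of_ne hr.2 hr1⟩
      rw [← inner_eq hr'.1 hr'.2 hr14 hr12 hr34]
      apply intervalIntegral.integral_nonneg zero_le_one
      intro s hs
      exact (g_mem hr hs).1
    rw [← ofReal_integral_eq_lintegral_ofReal hInt hnn]
    congr 1
    rw [integral_Icc_eq_integral_Ioc, ← intervalIntegral.integral_of_le zero_le_one]
    exact outer_val
  rw [key, ENNReal.toReal_ofReal]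
  positivity
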